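/- arXiv:1903.09165 — 2 statements merged into one kernel-verified Lean document; each statement's English description precedes it below -/
import Mathlib

section
/- Let D ≥ 3 and let c be the real Lie algebra with basis {J_{ab} = −J_{ba} : 1 ≤ a < b ≤ D} ∪ {B_a, P_a : 1 ≤ a ≤ D} ∪ {H} and nonzero brackets [J_{ab},J_{cd}] = δ_{bc}J_{ad} + δ_{ad}J_{bc} − δ_{bd}J_{ac} − δ_{ac}J_{bd}, [J_{ab},B_c] = δ_{cb}B_a − δ_{ca}B_b, [J_{ab},P_c] = δ_{cb}P_a − δ_{ca}P_b, [B_a,P_b] = δ_{ab}H (the Carroll algebra in D+1 dimensions). Then c is perfect, H spans a nonzero central element, and consequently c admits no nondegenerate invariant symmetric bilinear form. -/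
/-- The Kronecker delta. -/
def kron {D : ℕ} (a b : Fin D) : ℝ := if a = b then 1 else 0

/-- The basis family of the Carroll algebra in `D+1` dimensions: the `J_{ab}` with `a < b`,
the boosts `B_a`, the spatial translations `P_a` and the time translation `H`. -/
def carrollFam {D : ℕ} {g : Type*} (J : Fin D → Fin D → g) (B P : Fin D → g) (H : g) :
    ({p : Fin D × Fin D // p.1 < p.2} ⊕ (Fin D ⊕ (Fin D ⊕ Unit))) → g
  | Sum.inl p => J p.1.1 p.1.2
  | Sum.inr (Sum.inl a) => B a
  | Sum.inr (Sum.inr (Sum.inl a)) => P a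
  | Sum.inr (Sum.inr (Sum.inr _)) => H

/-- For `D ≥ 3`, the Carroll algebra in `D+1` dimensions is perfect, `H`
spans a nonzero central element, and consequently the algebra admits no nondegenerate
invariant symmetric bilinear form. -/
theorem carroll_perfect_center_no_metric
    (D : ℕ) (hD : 3 ≤ D)
    (g : Type*) [LieRing g] [LieAlgebra ℝ g]
    (J : Fin D → Fin D → g) (B P : Fin D → g) (H : g)
    (hJanti : ∀ a b, J a b = - J b a)
    (hindep : LinearIndependent ℝ (carrollFam J B P H))
    (hspan : Submodule.span ℝ (Set.range (carrollFam J B P H)) = ⊤)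
    (hJJ : ∀ a b c d, ⁅J a b, J c d⁆ =
      kron b c • J a d + kron a d • J b c - kron b d • J a c - kron a c • J b d)
    (hJB : ∀ a b c, ⁅J a b, B c⁆ = kron c b • B a - kron c a • B b)
    (hJP : ∀ a b c, ⁅J a b, P c⁆ = kron c b • P a - kron c a • P b)
    (hBP : ∀ a b, ⁅B a, P b⁆ = kron a b • H)
    (hBB : ∀ a b, ⁅B a, B b⁆ = 0)
    (hPP : ∀ a b, ⁅P a, P b⁆ = 0)
    (hBH : ∀ a, ⁅B a, H⁆ = 0)
    (hPH : ∀ a, ⁅P a, H⁆ = 0)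
    (hJH : ∀ a b, ⁅J a b, H⁆ = 0) :
    Submodule.span ℝ {w : g | ∃ x y : g, ⁅x, y⁆ = w} = ⊤ ∧
    (H ≠ 0 ∧ ∀ x : g, ⁅H, x⁆ = 0) ∧
    ¬ ∃ Bil : g →ₗ[ℝ] g →ₗ[ℝ] ℝ,
        (∀ x y : g, Bil x y = Bil y x) ∧
        (∀ x y z : g, Bil ⁅z, x⁆ y + Bil x ⁅z, y⁆ = 0) ∧
        (∀ x : g, (∀ y : g, Bil x y = 0) → x = 0) := by
  classical
  have hexists : ∀ a b : Fin D, ∃ c : Fin D, c ≠ a ∧ c ≠ b := by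
    intro a b
    have hsub : ({a, b} : Finset (Fin D)) ⊆ Finset.univ := Finset.subset_univ _
    have hcard : ({a, b} : Finset (Fin D)).card ≤ 2 := by
      apply le_trans (Finset.card_insert_le _ _); simp
    have hpos : 0 < ((Finset.univ : Finset (Fin D)) \ {a, b}).card := by
      rw [Finset.card_sdiff_of_subset hsub]
      simp only [Finset.card_univ, Fintype.card_fin]
      omega
    obtain ⟨c, hc⟩ := Finset.card_pos.mp hpos
    simp only [Finset.mem_sdiff, Finset.mem_insert, Finset.mem_singleton] at hc
    exact ⟨c, fun h => hc.2 (Or.inl h), fun h => hc.2 (Or.inr h)⟩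
  -- Part 1: perfectness
  set S : Set g := {w : g | ∃ x y : g, ⁅x, y⁆ = w} with hS
  have hrange : Set.range (carrollFam J B P H) ⊆ S := by
    rintro _ ⟨i, rfl⟩
    rcases i with ⟨⟨a, b⟩, hab⟩ | a | a | u
    · -- J a b with a < b
      obtain ⟨c, hca, hcb⟩ := hexists a b
      refine ⟨J a c, J c b, ?_⟩
      have hab' : a ≠ b := ne_of_lt hab
      rw [hJJ]
      simp [carrollFam, kron, hca, hcb, hab', hca.symm, hcb.symm]
    · -- B a
      obtain ⟨c, hca, _⟩ := hexists a a
      refine ⟨J a c, B c, ?_⟩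
      rw [hJB]
      simp [carrollFam, kron, hca]
    · -- P a
      obtain ⟨c, hca, _⟩ := hexists a a
      refine ⟨J a c, P c, ?_⟩
      rw [hJP]
      simp [carrollFam, kron, hca]
    · -- H
      obtain ⟨a, _, _⟩ := hexists ⟨0, by omega⟩ ⟨0, by omega⟩
      refine ⟨B a, P a, ?_⟩
      rw [hBP]
      simp [carrollFam, kron]
  have hperfect : Submodule.span ℝ S = ⊤ := by
    apply top_unique
    rw [← hspan]
    exact Submodule.span_mono hrange
  -- Part 2: H is nonzero and central
  have hHne : H ≠ 0 := hindep.ne_zero (Sum.inr (Sum.inr (Sum.inr ())))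
  have hHcentral : ∀ x : g, ⁅H, x⁆ = 0 := by
    intro x
    have hx : x ∈ Submodule.span ℝ (Set.range (carrollFam J B P H)) := by
      rw [hspan]; exact Submodule.mem_top
    induction hx using Submodule.span_induction with
    | mem y hy =>
      obtain ⟨i, rfl⟩ := hy
      rcases i with ⟨⟨a, b⟩, hab⟩ | a | a | u
      · show ⁅H, J a b⁆ = 0
        rw [← lie_skew, hJH, neg_zero]
      · show ⁅H, B a⁆ = 0
        rw [← lie_skew, hBH, neg_zero]
      · show ⁅H, P a⁆ = 0
        rw [← lie_skew, hPH, neg_zero]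
      · show ⁅H, H⁆ = 0
        exact lie_self H
    | zero => simp
    | add y z _ _ hy hz => rw [lie_add, hy, hz, add_zero]
    | smul r y _ hy => rw [lie_smul, hy, smul_zero]
  refine ⟨hperfect, ⟨hHne, hHcentral⟩, ?_⟩
  -- Part 3: no invariant nondegenerate form
  rintro ⟨Bil, hsym, hinv, hnd⟩
  apply hHne
  apply hnd
  intro y
  have hy : y ∈ Submodule.span ℝ S := by rw [hperfect]; exact Submodule.mem_top
  induction hy using Submodule.span_induction with
  | mem w hw =>
    obtain ⟨z, x, rfl⟩ := hw
    have h1 := hinv H x z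
    have h2 : ⁅z, H⁆ = 0 := by rw [← lie_skew, hHcentral, neg_zero]
    rw [h2] at h1
    simpa using h1
  | zero => simp
  | add w v _ _ hw hv => rw [map_add, hw, hv, add_zero]
  | smul r w _ hw => rw [map_smul, hw, smul_zero]
end

section
/- Fix D ≥ 2, a sign σ ∈ {1,−1}, and real numbers Λ, χ_B, χ_H, χ_J. Consider the real vector space with basis {J_{ab} = −J_{ba}}, {B_a}, {P_a}, {H}, {J*_{ab} = −J*_{ba}}, {H*} (indices in {1,…,D}) and nonzero brackets: [J_{ab},J_{cd}] = δ_{bc}J_{ad} + δ_{ad}J_{bc} − δ_{bd}J_{ac} − δ_{ac}J_{bd}, the same pattern for [J_{ab},J*_{cd}] with J* in place of J on the right, [J_{ab},B_c] = δ_{cb}B_a − δ_{ca}B_b, [J_{ab},P_c] = δ_{cb}P_a − δ_{ca}P_b, [B_a,H] = P_a, [P_a,H] = −σΛ²B_a, [B_a,B_b] = −χ_B J*_{ab}, [P_a,P_b] = −σΛ²χ_B J*_{ab}, [B_a,P_b] = −σΛ²χ_B δ_{ab}H* (the extended (A)dS-Galilei algebra in D+1 dimensions). Then this bracket satisfies the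 Jacobi identity; the symmetric bilinear form determined by B(B_a,B_b) = χ_Bδ_{ab}, B(P_a,P_b) = σΛ²χ_Bδ_{ab}, B(J_{ab},J*_{cd}) = δ_{ac}δ_{bd} − δ_{ad}δ_{bc}, B(H,H*) = 1, B(H,H) = χ_H, B(J_{ab},J_{cd}) = χ_J(δ_{ac}δ_{bd} − δ_{ad}δ_{bc}), with all other basis pairings zero, is invariant; and this form is nondegenerate if and only if Λ²χ_B ≠ 0. -/
set_option maxRecDepth 400000
set_option maxHeartbeats 4000000

/-- The basis family of the extended (A)dS-Galilei algebra in `D+1` dimensions: the rotations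
`J_{ab}` (`a < b`), boosts `B_a`, spatial translations `P_a`, time translation `H`, and the
extension generators `J*_{ab}` (`a < b`) and `H*`. -/
def adsGalExtFam {D : ℕ} {V : Type*} (J : Fin D → Fin D → V) (B P : Fin D → V) (H : V)
    (Js : Fin D → Fin D → V) (Hs : V) :
    ({p : Fin D × Fin D // p.1 < p.2} ⊕ (Fin D ⊕ (Fin D ⊕ (Unit ⊕
      ({p : Fin D × Fin D // p.1 < p.2} ⊕ Unit))))) → V
  | Sum.inl p => J p.1.1 p.1.2
  | Sum.inr (Sum.inl a) => B a
  | Sum.inr (Sum.inr (Sum.inl a)) => P a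
  | Sum.inr (Sum.inr (Sum.inr (Sum.inl _))) => H
  | Sum.inr (Sum.inr (Sum.inr (Sum.inr (Sum.inl p)))) => Js p.1.1 p.1.2
  | Sum.inr (Sum.inr (Sum.inr (Sum.inr (Sum.inr _)))) => Hs

private lemma span_zero {V W : Type*} [AddCommGroup V] [Module ℝ V] [AddCommGroup W]
    [Module ℝ W] {ι : Type*} {e : ι → V}
    (hspan : Submodule.span ℝ (Set.range e) = ⊤) (f : V →ₗ[ℝ] W)
    (h : ∀ i, f (e i) = 0) (x : V) : f x = 0 := by
  have hf : f = (0 : V →ₗ[ℝ] W) := LinearMap.ext_on hspan (by rintro _ ⟨i, rfl⟩; exact h i)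
  rw [hf]; rfl

private lemma kron_symm {D : ℕ} (a b : Fin D) : kron a b = kron b a := by
  simp [kron, eq_comm]

private lemma pair_spike {D : ℕ} (q p : {p : Fin D × Fin D // p.1 < p.2}) :
    kron q.1.1 p.1.1 * kron q.1.2 p.1.2 - kron q.1.1 p.1.2 * kron q.1.2 p.1.1
      = if q = p then 1 else 0 := by
  obtain ⟨⟨q1, q2⟩, hq⟩ := q
  obtain ⟨⟨p1, p2⟩, hp⟩ := p
  simp only [kron, Subtype.mk.injEq, Prod.mk.injEq]
  split_ifs <;> simp_all <;> omega

/-- The extended (A)dS-Galilei algebra in `D+1` dimensions: its bracket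
satisfies the Jacobi identity, the indicated symmetric bilinear form is invariant, and it is
nondegenerate iff `Λ²χ_B ≠ 0`. -/
theorem extended_ads_galilei_algebra
    (D : ℕ) (hD : 2 ≤ D) (σ : ℝ) (hσ : σ = 1 ∨ σ = -1) (Λ χB χH χJ : ℝ)
    (V : Type*) [AddCommGroup V] [Module ℝ V]
    (J Js : Fin D → Fin D → V) (B P : Fin D → V) (H Hs : V)
    (hJanti : ∀ a b, J a b = - J b a)
    (hJsanti : ∀ a b, Js a b = - Js b a)
    (hindep : LinearIndependent ℝ (adsGalExtFam J B P H Js Hs))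
    (hspan : Submodule.span ℝ (Set.range (adsGalExtFam J B P H Js Hs)) = ⊤)
    (br : V →ₗ[ℝ] V →ₗ[ℝ] V)
    (hbr_anti : ∀ x y : V, br x y = - br y x)
    (hJJ : ∀ a b c d, br (J a b) (J c d) =
      kron b c • J a d + kron a d • J b c - kron b d • J a c - kron a c • J b d)
    (hJJs : ∀ a b c d, br (J a b) (Js c d) =
      kron b c • Js a d + kron a d • Js b c - kron b d • Js a c - kron a c • Js b d)
    (hJB : ∀ a b c, br (J a b) (B c) = kron c b • B a - kron c a • B b)
    (hJP : ∀ a b c, br (J a b) (P c) = kron c b • P a - kron c a • P b)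
    (hBH : ∀ a, br (B a) H = P a)
    (hPH : ∀ a, br (P a) H = (-(σ * Λ ^ 2)) • B a)
    (hBB : ∀ a b, br (B a) (B b) = (-χB) • Js a b)
    (hPP : ∀ a b, br (P a) (P b) = (-(σ * Λ ^ 2 * χB)) • Js a b)
    (hBP : ∀ a b, br (B a) (P b) = (-(σ * Λ ^ 2 * χB) * kron a b) • Hs)
    (hJH : ∀ a b, br (J a b) H = 0)
    (hJHs : ∀ a b, br (J a b) Hs = 0)
    (hJsB : ∀ a b c, br (Js a b) (B c) = 0)
    (hJsP : ∀ a b c, br (Js a b) (P c) = 0)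
    (hJsH : ∀ a b, br (Js a b) H = 0)
    (hJsJs : ∀ a b c d, br (Js a b) (Js c d) = 0)
    (hJsHs : ∀ a b, br (Js a b) Hs = 0)
    (hBHs : ∀ a, br (B a) Hs = 0)
    (hPHs : ∀ a, br (P a) Hs = 0)
    (hHHs : br H Hs = 0)
    (Bil : V →ₗ[ℝ] V →ₗ[ℝ] ℝ)
    (hsymm : ∀ x y : V, Bil x y = Bil y x)
    (hBBF : ∀ a b, Bil (B a) (B b) = χB * kron a b)
    (hPPF : ∀ a b, Bil (P a) (P b) = σ * Λ ^ 2 * χB * kron a b)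
    (hJJsF : ∀ a b c d, Bil (J a b) (Js c d) = kron a c * kron b d - kron a d * kron b c)
    (hHHsF : Bil H Hs = 1)
    (hHHF : Bil H H = χH)
    (hJJF : ∀ a b c d, Bil (J a b) (J c d) = χJ * (kron a c * kron b d - kron a d * kron b c))
    (hJBF : ∀ a b c, Bil (J a b) (B c) = 0)
    (hJPF : ∀ a b c, Bil (J a b) (P c) = 0)
    (hJHF : ∀ a b, Bil (J a b) H = 0)
    (hJHsF : ∀ a b, Bil (J a b) Hs = 0)
    (hBPF : ∀ a b, Bil (B a) (P b) = 0)
    (hBHF : ∀ a, Bil (B a) H = 0)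
    (hBJsF : ∀ a b c, Bil (B a) (Js b c) = 0)
    (hBHsF : ∀ a, Bil (B a) Hs = 0)
    (hPHF : ∀ a, Bil (P a) H = 0)
    (hPJsF : ∀ a b c, Bil (P a) (Js b c) = 0)
    (hPHsF : ∀ a, Bil (P a) Hs = 0)
    (hHJsF : ∀ a b, Bil H (Js a b) = 0)
    (hJsJsF : ∀ a b c d, Bil (Js a b) (Js c d) = 0)
    (hJsHsF : ∀ a b, Bil (Js a b) Hs = 0)
    (hHsHsF : Bil Hs Hs = 0) :
    (∀ x y z : V, br x (br y z) + br y (br z x) + br z (br x y) = 0) ∧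
    (∀ x y z : V, Bil (br z x) y + Bil x (br z y) = 0) ∧
    ((∀ x : V, (∀ y : V, Bil x y = 0) → x = 0) ↔ Λ ^ 2 * χB ≠ 0) := by
  -- derived bracket table (flipped versions)
  have hsq : ∀ x : V, br x x = 0 := by
    intro x
    have h := hbr_anti x x
    have h2 : (2 : ℝ) • br x x = 0 := by
      rw [two_smul]; nth_rewrite 2 [h]; abel
    simpa using (smul_eq_zero.mp h2).resolve_left (by norm_num)
  have hσ0 : σ ≠ 0 := by rcases hσ with h | h <;> rw [h] <;> norm_num
  have hJsJ : ∀ a b c d, br (Js a b) (J c d) =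
      -(kron d a • Js c b + kron c b • Js d a - kron d b • Js c a - kron c a • Js d b) :=
    fun a b c d => by rw [hbr_anti, hJJs]
  have hBJ : ∀ c a b, br (B c) (J a b) = -(kron c b • B a - kron c a • B b) :=
    fun c a b => by rw [hbr_anti, hJB]
  have hPJ : ∀ c a b, br (P c) (J a b) = -(kron c b • P a - kron c a • P b) :=
    fun c a b => by rw [hbr_anti, hJP]
  have hHJ : ∀ a b, br H (J a b) = 0 := fun a b => by rw [hbr_anti, hJH, neg_zero]
  have hHsJ : ∀ a b, br Hs (J a b) = 0 := fun a b => by rw [hbr_anti, hJHs, neg_zero]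
  have hHB : ∀ a, br H (B a) = -(P a) := fun a => by rw [hbr_anti, hBH]
  have hHP : ∀ a, br H (P a) = -((-(σ * Λ ^ 2)) • B a) := fun a => by rw [hbr_anti, hPH]
  have hPB : ∀ a b, br (P a) (B b) = -((-(σ * Λ ^ 2 * χB) * kron b a) • Hs) :=
    fun a b => by rw [hbr_anti, hBP]
  have hHsB : ∀ a, br Hs (B a) = 0 := fun a => by rw [hbr_anti, hBHs, neg_zero]
  have hHsP : ∀ a, br Hs (P a) = 0 := fun a => by rw [hbr_anti, hPHs, neg_zero]
  have hBJs : ∀ a b c, br (B a) (Js b c) = 0 := fun a b c => by rw [hbr_anti, hJsB, neg_zero]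
  have hPJs : ∀ a b c, br (P a) (Js b c) = 0 := fun a b c => by rw [hbr_anti, hJsP, neg_zero]
  have hHJs : ∀ a b, br H (Js a b) = 0 := fun a b => by rw [hbr_anti, hJsH, neg_zero]
  have hHsJs : ∀ a b, br Hs (Js a b) = 0 := fun a b => by rw [hbr_anti, hJsHs, neg_zero]
  have hHsH : br Hs H = 0 := by rw [hbr_anti, hHHs, neg_zero]
  -- derived bilinear form table (flipped versions)
  have hBJF : ∀ c a b, Bil (B c) (J a b) = 0 := fun c a b => by rw [hsymm, hJBF]
  have hPJF : ∀ c a b, Bil (P c) (J a b) = 0 := fun c a b => by rw [hsymm, hJPF]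
  have hHJF : ∀ a b, Bil H (J a b) = 0 := fun a b => by rw [hsymm, hJHF]
  have hHsJF : ∀ a b, Bil Hs (J a b) = 0 := fun a b => by rw [hsymm, hJHsF]
  have hJsJF : ∀ a b c d, Bil (Js a b) (J c d) = kron c a * kron d b - kron c b * kron d a :=
    fun a b c d => by rw [hsymm, hJJsF]
  have hPBF : ∀ a b, Bil (P a) (B b) = 0 := fun a b => by rw [hsymm, hBPF]
  have hHBF : ∀ a, Bil H (B a) = 0 := fun a => by rw [hsymm, hBHF]
  have hJsBF : ∀ a b c, Bil (Js b c) (B a) = 0 := fun a b c => by rw [hsymm, hBJsF]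
  have hHsBF : ∀ a, Bil Hs (B a) = 0 := fun a => by rw [hsymm, hBHsF]
  have hHPF : ∀ a, Bil H (P a) = 0 := fun a => by rw [hsymm, hPHF]
  have hJsPF : ∀ a b c, Bil (Js b c) (P a) = 0 := fun a b c => by rw [hsymm, hPJsF]
  have hHsPF : ∀ a, Bil Hs (P a) = 0 := fun a => by rw [hsymm, hPHsF]
  have hJsHF : ∀ a b, Bil (Js a b) H = 0 := fun a b => by rw [hsymm, hHJsF]
  have hHsHF : Bil Hs H = 1 := by rw [hsymm, hHHsF]
  have hHsJsF : ∀ a b, Bil Hs (Js a b) = 0 := fun a b => by rw [hsymm, hJsHsF]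
  -- skew-symmetrization trick
  obtain ⟨K, hKd⟩ : ∃ K : Fin D → Fin D → V, ∀ x y, J x y = (2⁻¹ : ℝ) • (K x y - K y x) :=
    ⟨J, fun x y => by rw [hJanti y x]; module⟩
  obtain ⟨Ks, hKsd⟩ : ∃ Ks : Fin D → Fin D → V, ∀ x y, Js x y = (2⁻¹ : ℝ) • (Ks x y - Ks y x) :=
    ⟨Js, fun x y => by rw [hJsanti y x]; module⟩
  refine ⟨?_, ?_, ?_⟩
  · -- Jacobi identity
    have jac_key : ∀ i j k, br (adsGalExtFam J B P H Js Hs i)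
        (br (adsGalExtFam J B P H Js Hs j) (adsGalExtFam J B P H Js Hs k))
        + br (adsGalExtFam J B P H Js Hs j)
        (br (adsGalExtFam J B P H Js Hs k) (adsGalExtFam J B P H Js Hs i))
        + br (adsGalExtFam J B P H Js Hs k)
        (br (adsGalExtFam J B P H Js Hs i) (adsGalExtFam J B P H Js Hs j)) = 0 := by
      rintro (p | a | a | u | p | u) (q | b | b | v | q | v) (r | c | c | w | r | w) <;>
        simp only [adsGalExtFam] <;>
        simp only [hJJ, hJJs, hJB, hJP, hBH, hPH, hBB, hPP, hBP, hJH, hJHs, hJsB, hJsP, hJsH,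
          hJsJs, hJsHs, hBHs, hPHs, hHHs, hJsJ, hBJ, hPJ, hHJ, hHsJ, hHB, hHP, hPB, hHsB,
          hHsP, hBJs, hPJs, hHJs, hHsJs, hHsH, hsq, map_add, map_sub, map_neg, map_smul,
          map_zero, smul_zero, smul_neg, neg_zero, add_zero, zero_add, neg_neg, sub_zero,
          zero_sub, sub_self, neg_add_rev] <;>
        first
          | rfl
          | ((try simp only [hKd, hKsd]);
             match_scalars <;>
               first
                 | ring1
                 | (simp only [kron_symm]; ring1)
                 | (simp [kron]; try split_ifs <;> first | ring1 | simp_all)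
                 | (simp [kron]; split_ifs <;> first | ring1 | simp_all))
    have jac2 : ∀ i j (z : V), br (adsGalExtFam J B P H Js Hs i)
        (br (adsGalExtFam J B P H Js Hs j) z)
        + br (adsGalExtFam J B P H Js Hs j) (br z (adsGalExtFam J B P H Js Hs i))
        + br z (br (adsGalExtFam J B P H Js Hs i) (adsGalExtFam J B P H Js Hs j)) = 0 := by
      intro i j z
      have := span_zero hspan
        ((br (adsGalExtFam J B P H Js Hs i)).comp (br (adsGalExtFam J B P H Js Hs j))
          + (br (adsGalExtFam J B P H Js Hs j)).comp (br.flip (adsGalExtFam J B P H Js Hs i))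
          + br.flip (br (adsGalExtFam J B P H Js Hs i) (adsGalExtFam J B P H Js Hs j)))
        (fun k => by
          simpa [LinearMap.add_apply, LinearMap.comp_apply, LinearMap.flip_apply]
            using jac_key i j k) z
      simpa [LinearMap.add_apply, LinearMap.comp_apply, LinearMap.flip_apply] using this
    have jac3 : ∀ i (y z : V), br (adsGalExtFam J B P H Js Hs i) (br y z)
        + br y (br z (adsGalExtFam J B P H Js Hs i))
        + br z (br (adsGalExtFam J B P H Js Hs i) y) = 0 := by
      intro i y z
      have := span_zero hspan
        ((br (adsGalExtFam J B P H Js Hs i)).comp (br.flip z)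
          + br.flip (br z (adsGalExtFam J B P H Js Hs i))
          + (br z).comp (br (adsGalExtFam J B P H Js Hs i)))
        (fun j => by
          simpa [LinearMap.add_apply, LinearMap.comp_apply, LinearMap.flip_apply]
            using jac2 i j z) y
      simpa [LinearMap.add_apply, LinearMap.comp_apply, LinearMap.flip_apply] using this
    intro x y z
    have := span_zero hspan
      (br.flip (br y z) + (br y).comp (br z) + (br z).comp (br.flip y))
      (fun i => by
        simpa [LinearMap.add_apply, LinearMap.comp_apply, LinearMap.flip_apply]
          using jac3 i y z) x
    simpa [LinearMap.add_apply, LinearMap.comp_apply, LinearMap.flip_apply] using this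
  · -- invariance
    have inv_key : ∀ k i j, Bil (br (adsGalExtFam J B P H Js Hs k) (adsGalExtFam J B P H Js Hs i))
        (adsGalExtFam J B P H Js Hs j)
        + Bil (adsGalExtFam J B P H Js Hs i)
        (br (adsGalExtFam J B P H Js Hs k) (adsGalExtFam J B P H Js Hs j)) = 0 := by
      rintro (p | a | a | u | p | u) (q | b | b | v | q | v) (r | c | c | w | r | w) <;>
        simp only [adsGalExtFam] <;>
        simp only [hJJ, hJJs, hJB, hJP, hBH, hPH, hBB, hPP, hBP, hJH, hJHs, hJsB, hJsP, hJsH,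
          hJsJs, hJsHs, hBHs, hPHs, hHHs, hJsJ, hBJ, hPJ, hHJ, hHsJ, hHB, hHP, hPB, hHsB,
          hHsP, hBJs, hPJs, hHJs, hHsJs, hHsH, hsq, map_add, map_sub, map_neg, map_smul,
          map_zero, smul_zero, smul_neg, neg_zero, add_zero, zero_add, neg_neg, sub_zero,
          zero_sub, sub_self, neg_add_rev, LinearMap.add_apply, LinearMap.sub_apply,
          LinearMap.neg_apply, LinearMap.smul_apply, LinearMap.zero_apply, smul_eq_mul,
          hBBF, hPPF, hJJsF, hHHsF, hHHF, hJJF, hJBF, hJPF, hJHF, hJHsF, hBPF, hBHF, hBJsF,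
          hBHsF, hPHF, hPJsF, hPHsF, hHJsF, hJsJsF, hJsHsF, hHsHsF, hBJF, hPJF, hHJF, hHsJF,
          hJsJF, hPBF, hHBF, hJsBF, hHsBF, hHPF, hJsPF, hHsPF, hJsHF, hHsHF, hHsJsF] <;>
        first
          | rfl
          | ring1
          | (simp only [kron_symm]; ring1)
          | (simp [kron]; done)
          | (simp [kron]; split_ifs <;> first | ring1 | simp_all)
          | (simp only [kron_symm]; simp [kron]; split_ifs <;> first | ring1 | simp_all)
    have inv2 : ∀ k i (y : V),
        Bil (br (adsGalExtFam J B P H Js Hs k) (adsGalExtFam J B P H Js Hs i)) y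
        + Bil (adsGalExtFam J B P H Js Hs i) (br (adsGalExtFam J B P H Js Hs k) y) = 0 := by
      intro k i y
      have := span_zero hspan
        (Bil (br (adsGalExtFam J B P H Js Hs k) (adsGalExtFam J B P H Js Hs i))
          + (Bil (adsGalExtFam J B P H Js Hs i)).comp (br (adsGalExtFam J B P H Js Hs k)))
        (fun j => by
          simpa [LinearMap.add_apply, LinearMap.comp_apply] using inv_key k i j) y
      simpa [LinearMap.add_apply, LinearMap.comp_apply] using this
    have inv3 : ∀ k (x y : V), Bil (br (adsGalExtFam J B P H Js Hs k) x) y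
        + Bil x (br (adsGalExtFam J B P H Js Hs k) y) = 0 := by
      intro k x y
      have := span_zero hspan
        ((Bil.flip y).comp (br (adsGalExtFam J B P H Js Hs k))
          + Bil.flip (br (adsGalExtFam J B P H Js Hs k) y))
        (fun i => by
          simpa [LinearMap.add_apply, LinearMap.comp_apply, LinearMap.flip_apply]
            using inv2 k i y) x
      simpa [LinearMap.add_apply, LinearMap.comp_apply, LinearMap.flip_apply] using this
    intro x y z
    have := span_zero hspan
      ((Bil.flip y).comp (br.flip x) + (Bil x).comp (br.flip y))
      (fun k => by
        simpa [LinearMap.add_apply, LinearMap.comp_apply, LinearMap.flip_apply]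
          using inv3 k x y) z
    simpa [LinearMap.add_apply, LinearMap.comp_apply, LinearMap.flip_apply] using this
  · -- nondegeneracy
    constructor
    · intro hnd
      intro h0
      rcases mul_eq_zero.mp h0 with h | h
      · -- Λ ^ 2 = 0 : P direction is degenerate
        have hy : ∀ y, Bil (P ⟨0, by omega⟩) y = 0 := by
          refine span_zero hspan (Bil (P ⟨0, by omega⟩)) ?_
          rintro (p | a | a | u | p | u) <;>
            simp [adsGalExtFam, hPPF, hPHF, hPJsF, hPHsF, hPJF, hPBF, h]
        have := hnd _ hy
        have hne := hindep.ne_zero (Sum.inr (Sum.inr (Sum.inl (⟨0, by omega⟩ : Fin D))))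
        simp only [adsGalExtFam] at hne
        exact hne this
      · -- χB = 0 : B direction is degenerate
        have hy : ∀ y, Bil (B ⟨0, by omega⟩) y = 0 := by
          refine span_zero hspan (Bil (B ⟨0, by omega⟩)) ?_
          rintro (p | a | a | u | p | u) <;>
            simp [adsGalExtFam, hBBF, hBPF, hBHF, hBJsF, hBHsF, hBJF, h]
        have := hnd _ hy
        have hne := hindep.ne_zero (Sum.inr (Sum.inl (⟨0, by omega⟩ : Fin D)))
        simp only [adsGalExtFam] at hne
        exact hne this
    · intro hne x hx
      have hχB : χB ≠ 0 := fun h => hne (by rw [h, mul_zero])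
      have hσΛχ : σ * Λ ^ 2 * χB ≠ 0 := by
        intro h0
        apply hne
        rcases hσ with h | h <;> rw [h] at h0 <;> nlinarith [h0]
      have hx_mem : x ∈ Submodule.span ℝ (Set.range (adsGalExtFam J B P H Js Hs)) :=
        hspan ▸ Submodule.mem_top
      rw [Finsupp.mem_span_range_iff_exists_finsupp] at hx_mem
      obtain ⟨c, hc⟩ := hx_mem
      have key : ∀ t, (∑ i ∈ c.support, c i * Bil (adsGalExtFam J B P H Js Hs i) t) = 0 := by
        intro t
        have h0 := hx t
        rw [← hc] at h0
        simpa [Finsupp.sum, map_sum, LinearMap.sum_apply, map_smul, LinearMap.smul_apply,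
          smul_eq_mul] using h0
      have hext : ∀ (i₀) (t : V) (κ : ℝ), κ ≠ 0 →
          (∀ i, c i ≠ 0 → Bil (adsGalExtFam J B P H Js Hs i) t = if i = i₀ then κ else 0) →
          c i₀ = 0 := by
        intro i₀ t κ hκ htab
        have h1 : (∑ i ∈ c.support, if i = i₀ then c i * κ else 0) = 0 := by
          refine Eq.trans (Finset.sum_congr rfl fun i hi => ?_) (key t)
          rw [htab i (Finsupp.mem_support_iff.mp hi)]
          split_ifs <;> simp
        have h2 : (∑ i ∈ c.support, if i = i₀ then c i * κ else 0)
            = if i₀ = i₀ then c i₀ * κ else 0 :=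
          Finset.sum_eq_single i₀ (fun b _ hb => if_neg hb)
            (fun h' => by rw [if_pos rfl, Finsupp.notMem_support_iff.mp h', zero_mul])
        rw [h2, if_pos rfl] at h1
        exact (mul_eq_zero.mp h1).resolve_right hκ
      have hcB : ∀ a, c (Sum.inr (Sum.inl a)) = 0 := by
        intro a
        refine hext _ (B a) χB hχB ?_
        rintro (q | b | b | ⟨⟩ | q | ⟨⟩) hcne <;>
          simp [adsGalExtFam, hJBF, hBBF, hPBF, hHBF, hJsBF, hHsBF, kron, mul_ite]
      have hcP : ∀ a, c (Sum.inr (Sum.inr (Sum.inl a))) = 0 := by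
        intro a
        refine hext _ (P a) (σ * Λ ^ 2 * χB) hσΛχ ?_
        rintro (q | b | b | ⟨⟩ | q | ⟨⟩) hcne <;>
          simp [adsGalExtFam, hJPF, hBPF, hPPF, hHPF, hJsPF, hHsPF, kron, mul_ite]
      have hcJ : ∀ p, c (Sum.inl p) = 0 := by
        intro p
        refine hext _ (Js p.1.1 p.1.2) 1 one_ne_zero ?_
        rintro (q | b | b | ⟨⟩ | q | ⟨⟩) hcne <;>
          simp [adsGalExtFam, hJJsF, hBJsF, hPJsF, hHJsF, hJsJsF, hHsJsF, pair_spike]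
      have hcH : c (Sum.inr (Sum.inr (Sum.inr (Sum.inl ())))) = 0 := by
        refine hext _ Hs 1 one_ne_zero ?_
        rintro (q | b | b | ⟨⟩ | q | ⟨⟩) hcne <;>
          simp [adsGalExtFam, hJHsF, hBHsF, hPHsF, hHHsF, hJsHsF, hHsHsF]
      have hcJs : ∀ p, c (Sum.inr (Sum.inr (Sum.inr (Sum.inr (Sum.inl p))))) = 0 := by
        intro p
        refine hext _ (J p.1.1 p.1.2) 1 one_ne_zero ?_
        rintro (q | b | b | ⟨⟩ | q | ⟨⟩) hcne
        · by_cases hqp : q = p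
          · exact absurd (hqp ▸ hcJ p) hcne
          · have := pair_spike q p
            simp [adsGalExtFam, hJJF, this, hqp, if_neg hqp]
        · simp [adsGalExtFam, hBJF]
        · simp [adsGalExtFam, hPJF]
        · simp [adsGalExtFam, hHJF]
        · by_cases hqp : p = q
          · simp [adsGalExtFam, hJsJF, pair_spike, hqp]
          · simp [adsGalExtFam, hJsJF, pair_spike, hqp, Ne.symm hqp]
        · simp [adsGalExtFam, hHsJF]
      have hcHs : c (Sum.inr (Sum.inr (Sum.inr (Sum.inr (Sum.inr ()))))) = 0 := by
        refine hext _ H 1 one_ne_zero ?_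
        rintro (q | b | b | ⟨⟩ | q | ⟨⟩) hcne
        · simp [adsGalExtFam, hJHF]
        · simp [adsGalExtFam, hBHF]
        · simp [adsGalExtFam, hPHF]
        · exact absurd hcH hcne
        · simp [adsGalExtFam, hJsHF]
        · simp [adsGalExtFam, hHsHF]
      have hall : ∀ i, c i = 0 := by
        rintro (q | b | b | ⟨⟩ | q | ⟨⟩)
        exacts [hcJ q, hcB b, hcP b, hcH, hcJs q, hcHs]
      rw [← hc]
      exact Finset.sum_eq_zero fun i _ => by simp [hall]
end
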